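/- Let V be a real normed vector space, let μ1, μ2 ∈ V, and let p, q, p', q' be positive real numbers. Define the first-layer expected representations h1 = (p/(p+q))·μ1 + (q/(p+q))·μ2 and h2 = (q/(p+q))·μ1 + (p/(p+q))·μ2. Define the original second-layer representations g1 = (p/(p+q))·h1 + (q/(p+q))·h2, g2 = (q/(p+q))·h1 + (p/(p+q))·h2, and the rewired second-layer representations g1' = (p'/(p'+q'))·h1 + (q'/(p'+q'))·h2, g2' = (q'/(p'+q'))·h1 + (p'/(p'+q'))·h2. If p ≠ q, then ‖g1' - g2'‖ = (|p' - q'|/(p' + q')) · ((p + q)/|p - q|) · ‖g1 - g2‖. -/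

import Mathlib

/-- Rewiring the second layer with new intra/inter-class probabilities `p'`, `q'` scales the
expected distance between the two class centroids:
`‖g1' - g2'‖ = (|p' - q'| / (p' + q')) * ((p + q) / |p - q|) * ‖g1 - g2‖` when `p ≠ q`. -/
theorem csbm_rewired_dist {V : Type*} [NormedAddCommGroup V] [NormedSpace ℝ V]
    (μ1 μ2 : V) (p q p' q' : ℝ) (hp : 0 < p) (hq : 0 < q) (hp' : 0 < p') (hq' : 0 < q')
    (hpq : p ≠ q)
    (h1 h2 g1 g2 g1' g2' : V)
    (hh1 : h1 = (p / (p + q)) • μ1 + (q / (p + q)) • μ2)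
    (hh2 : h2 = (q / (p + q)) • μ1 + (p / (p + q)) • μ2)
    (hg1 : g1 = (p / (p + q)) • h1 + (q / (p + q)) • h2)
    (hg2 : g2 = (q / (p + q)) • h1 + (p / (p + q)) • h2)
    (hg1' : g1' = (p' / (p' + q')) • h1 + (q' / (p' + q')) • h2)
    (hg2' : g2' = (q' / (p' + q')) • h1 + (p' / (p' + q')) • h2) :
    ‖g1' - g2'‖ = (|p' - q'| / (p' + q')) * ((p + q) / |p - q|) * ‖g1 - g2‖ := by
  have key : ∀ a b : ℝ,
      ((a / (a + b)) • h1 + (b / (a + b)) • h2) - ((b / (a + b)) • h1 + (a / (a + b)) • h2)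
        = ((a - b) / (a + b)) • (h1 - h2) := by
    intro a b
    rw [smul_sub, sub_div, sub_smul, sub_smul]
    abel
  have e1 : g1 - g2 = ((p - q) / (p + q)) • (h1 - h2) := by rw [hg1, hg2]; exact key p q
  have e2 : g1' - g2' = ((p' - q') / (p' + q')) • (h1 - h2) := by rw [hg1', hg2']; exact key p' q'
  have hpq0 : 0 < p + q := by linarith
  have hpq0' : 0 < p' + q' := by linarith
  have habs : |p - q| ≠ 0 := by
    simp [sub_eq_zero, hpq]
  rw [e1, e2, norm_smul, norm_smul]
  rw [Real.norm_eq_abs, Real.norm_eq_abs, abs_div, abs_div,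
    abs_of_pos hpq0, abs_of_pos hpq0']
  field_simp
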